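/- Let F(z) be a monic polynomial of degree M with roots ℓ_1, ..., ℓ_M, and suppose F(z) = (prod_{k=1}^M (z-(1-k))) · G(z) where G(z) = 2F1(-M,γ;z;c) is a rational function of z. Then the logarithmic derivative satisfies (ln G(z))' = sum_{k=1}^M [ 1/(z - ℓ_k) - 1/(z - (1-k)) ], and consequently the inverse formal Laplace transform of ln G(z) (as a power series in z^{-1}) equals sum_{n>=0} (t^n/(n+1)!) · sum_{k=1}^M [ (1-k)^{n+1} - ℓ_k^{n+1} ]. -/

import Mathlib

open Finset in
lemma ratio_aux {M : ℕ} (c : Fin M → ℝ) (z : ℝ) (h : ∀ k, z - c k ≠ 0) :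
    (∑ k, ∏ j ∈ Finset.univ.erase k, (z - c j)) / ∏ k, (z - c k)
      = ∑ k, 1 / (z - c k) := by
  rw [Finset.sum_div]
  refine Finset.sum_congr rfl fun k _ => ?_
  rw [← Finset.mul_prod_erase Finset.univ _ (Finset.mem_univ k), mul_comm,
    div_mul_eq_div_div, div_self (Finset.prod_ne_zero_iff.mpr fun j _ => h j)]

/-- suppose `F(z) = ∏_{k=1}^M (z - ℓₖ)` is a monic polynomial of
degree `M` with roots `ℓ₁,…,ℓ_M` and `F(z) = (∏_{k=1}^M (z-(1-k))) · G(z)` (for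
`z` away from the poles `1-k` of the rational function `G`).  Then
`(ln G(z))' = ∑_{k=1}^M [1/(z-ℓₖ) - 1/(z-(1-k))]`, and the expansion of
`ln G(z)` as a power series in `z⁻¹` has coefficients
`(∑ₖ ((1-k)^{n+1} - ℓₖ^{n+1}))/(n+1)` at `z^{-n-1}`; equivalently, the inverse
formal Laplace transform of `ln G` is
`∑ₙ (tⁿ/(n+1)!) ∑ₖ ((1-k)^{n+1} - ℓₖ^{n+1})`. -/
theorem stmt12 (M : ℕ) (hM : 1 ≤ M) (G : ℝ → ℝ) (ℓ : Fin M → ℝ)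
    (hG : ∀ z : ℝ, (∀ k : Fin M, z ≠ 1 - ((k : ℕ) + 1 : ℝ)) →
      ∏ k : Fin M, (z - ℓ k)
        = (∏ k : Fin M, (z - (1 - ((k : ℕ) + 1 : ℝ)))) * G z) :
    (∀ z : ℝ, (∀ k : Fin M, z ≠ 1 - ((k : ℕ) + 1 : ℝ)) → G z ≠ 0 →
      deriv G z / G z
        = ∑ k : Fin M, (1 / (z - ℓ k) - 1 / (z - (1 - ((k : ℕ) + 1 : ℝ))))) ∧
    (∀ z : ℝ, (∀ k : Fin M, |ℓ k| < z) → (M : ℝ) < z →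
      HasSum (fun n : ℕ =>
          (∑ k : Fin M, ((1 - ((k : ℕ) + 1 : ℝ)) ^ (n + 1) - ℓ k ^ (n + 1)))
            / ((n : ℝ) + 1) * (z⁻¹) ^ (n + 1))
        (Real.log (G z))) := by
  set a : Fin M → ℝ := fun k => 1 - ((k : ℕ) + 1 : ℝ) with ha
  have ha' : ∀ k : Fin M, (1 - ((k : ℕ) + 1 : ℝ)) = a k := fun _ => rfl
  constructor
  · intro z hz hGz
    have hQk : ∀ k, z - a k ≠ 0 := fun k => sub_ne_zero.mpr (hz k)
    have hQ : (∏ k, (z - a k)) ≠ 0 := Finset.prod_ne_zero_iff.mpr fun k _ => hQk k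
    have hPQ := hG z hz
    simp only [ha'] at hPQ
    have hP : (∏ k, (z - ℓ k)) ≠ 0 := by rw [hPQ]; exact mul_ne_zero hQ hGz
    have hPk : ∀ k, z - ℓ k ≠ 0 := fun k =>
      Finset.prod_ne_zero_iff.mp hP k (Finset.mem_univ k)
    have hGeq : G z = (∏ k, (z - ℓ k)) / ∏ k, (z - a k) := by
      rw [eq_div_iff hQ, hPQ]; ring
    have hPd : HasDerivAt (fun w => ∏ k, (w - ℓ k))
        (∑ k, ∏ j ∈ Finset.univ.erase k, (z - ℓ j)) z := by
      have := HasDerivAt.fun_finsetProd (u := Finset.univ)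
        (f := fun k w => w - ℓ k) (f' := fun _ => (1 : ℝ))
        (fun i _ => (hasDerivAt_id z).sub_const (ℓ i))
      simpa using this
    have hQd : HasDerivAt (fun w => ∏ k, (w - a k))
        (∑ k, ∏ j ∈ Finset.univ.erase k, (z - a j)) z := by
      have := HasDerivAt.fun_finsetProd (u := Finset.univ)
        (f := fun k w => w - a k) (f' := fun _ => (1 : ℝ))
        (fun i _ => (hasDerivAt_id z).sub_const (a i))
      simpa using this
    have hfd : HasDerivAt (fun w => (∏ k, (w - ℓ k)) / ∏ k, (w - a k))
        (((∑ k, ∏ j ∈ Finset.univ.erase k, (z - ℓ j)) * (∏ k, (z - a k))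
          - (∏ k, (z - ℓ k)) * (∑ k, ∏ j ∈ Finset.univ.erase k, (z - a j)))
          / (∏ k, (z - a k)) ^ 2) z := hPd.div hQd hQ
    have hGd : HasDerivAt G
        (((∑ k, ∏ j ∈ Finset.univ.erase k, (z - ℓ j)) * (∏ k, (z - a k))
          - (∏ k, (z - ℓ k)) * (∑ k, ∏ j ∈ Finset.univ.erase k, (z - a j)))
          / (∏ k, (z - a k)) ^ 2) z := by
      refine hfd.congr_of_eventuallyEq ?_
      have hev : ∀ᶠ w in nhds z, ∀ k : Fin M, w ≠ a k :=
        Filter.eventually_all.2 fun k => eventually_ne_nhds (hz k)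
      filter_upwards [hev] with w hw
      have hGw := hG w hw
      simp only [ha'] at hGw
      have hQw : (∏ k, (w - a k)) ≠ 0 :=
        Finset.prod_ne_zero_iff.mpr fun k _ => sub_ne_zero.mpr (hw k)
      rw [eq_div_iff hQw, hGw]; ring
    rw [hGd.deriv, hGeq]
    simp only [ha']
    rw [Finset.sum_sub_distrib, ← ratio_aux ℓ z hPk, ← ratio_aux a z hQk]
    field_simp
  · intro z hz hzM
    have hz0 : (0 : ℝ) < z := lt_of_le_of_lt (Nat.cast_nonneg M) hzM
    have haneg : ∀ k : Fin M, a k ≤ 0 := by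
      intro k; simp only [ha]
      have : (0 : ℝ) ≤ (k : ℕ) := Nat.cast_nonneg _
      linarith
    have hza : ∀ k : Fin M, 0 < z - a k := fun k => by
      have := haneg k; linarith
    have hzl : ∀ k : Fin M, 0 < z - ℓ k := fun k =>
      sub_pos.mpr (lt_of_le_of_lt (le_abs_self _) (hz k))
    have hzne : ∀ k : Fin M, z ≠ 1 - ((k : ℕ) + 1 : ℝ) := fun k => by
      have := hza k; rw [ha'] ; intro h; rw [h] at this; simp at this
    have hPQ := hG z hzne
    simp only [ha'] at hPQ
    have hQ : (∏ k, (z - a k)) ≠ 0 :=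
      Finset.prod_ne_zero_iff.mpr fun k _ => (hza k).ne'
    have hP : (∏ k, (z - ℓ k)) ≠ 0 :=
      Finset.prod_ne_zero_iff.mpr fun k _ => (hzl k).ne'
    have habs_a : ∀ k : Fin M, |a k / z| < 1 := by
      intro k
      rw [abs_div, abs_of_pos hz0, div_lt_one hz0]
      have h1 : |a k| = ((k : ℕ) : ℝ) := by
        rw [abs_of_nonpos (haneg k)]; simp only [ha]; ring
      have h2 : ((k : ℕ) : ℝ) < M := by exact_mod_cast k.2
      rw [h1]; linarith
    have habs_l : ∀ k : Fin M, |ℓ k / z| < 1 := by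
      intro k
      rw [abs_div, abs_of_pos hz0, div_lt_one hz0]
      exact hz k
    have hsum : ∀ k : Fin M, HasSum
        (fun n : ℕ => (a k / z) ^ (n + 1) / (n + 1) - (ℓ k / z) ^ (n + 1) / (n + 1))
        (-Real.log (1 - a k / z) - -Real.log (1 - ℓ k / z)) := fun k =>
      (Real.hasSum_pow_div_log_of_abs_lt_one (habs_a k)).sub
        (Real.hasSum_pow_div_log_of_abs_lt_one (habs_l k))
    have htot := hasSum_sum (f := fun (k : Fin M) (n : ℕ) =>
      (a k / z) ^ (n + 1) / (n + 1) - (ℓ k / z) ^ (n + 1) / (n + 1))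
      (s := Finset.univ) (fun k _ => hsum k)
    have hval : ∑ k : Fin M, (-Real.log (1 - a k / z) - -Real.log (1 - ℓ k / z))
        = Real.log (G z) := by
      have hGeq : G z = (∏ k, (z - ℓ k)) / ∏ k, (z - a k) := by
        rw [eq_div_iff hQ, hPQ]; ring
      rw [hGeq, Real.log_div hP hQ,
        Real.log_prod (fun k _ => (hzl k).ne'),
        Real.log_prod (fun k _ => (hza k).ne'), ← Finset.sum_sub_distrib]
      refine Finset.sum_congr rfl fun k _ => ?_
      have h1 : (1 : ℝ) - a k / z = (z - a k) / z := by field_simp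
      have h2 : (1 : ℝ) - ℓ k / z = (z - ℓ k) / z := by field_simp
      rw [h1, h2, Real.log_div (hza k).ne' hz0.ne', Real.log_div (hzl k).ne' hz0.ne']
      ring
    rw [hval] at htot
    convert htot using 1
    funext n
    simp only [ha', Finset.sum_div, Finset.sum_mul]
    refine Finset.sum_congr rfl fun k _ => ?_
    rw [div_pow, div_pow, inv_pow]
    ring
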